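/- Gallai's theorem: for every finite simple graph G on n vertices with no isolated vertices, α'(G) + β'(G) = n, where α'(G) is the maximum matching size and β'(G) is the minimum edge cover size. -/
import Mathlib


/-- A set of edges is a matching set if its edges are pairwise vertex-disjoint. -/
def IsMatchingSet {V : Type*} (M : Finset (Sym2 V)) : Prop :=
  ∀ e ∈ M, ∀ e' ∈ M, e ≠ e' → ∀ v : V, ¬(v ∈ e ∧ v ∈ e')

/-- A set of edges of `G` covering every vertex. -/
def IsEdgeCoverSet {V : Type*} (G : SimpleGraph V) (S : Finset (Sym2 V)) : Prop :=
  ↑S ⊆ G.edgeSet ∧ ∀ v : V, ∃ e ∈ S, v ∈ e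

/-- Any edge set `S` covering a vertex set `T` contains a matching `M'` with
`|T| ≤ |M'| + |S|`. -/
lemma exists_matching_in_cover {V : Type*} [DecidableEq V] (S : Finset (Sym2 V)) :
    ∀ T : Finset V, (∀ v ∈ T, ∃ e ∈ S, v ∈ e) →
      ∃ M' : Finset (Sym2 V), M' ⊆ S ∧ IsMatchingSet M' ∧ T.card ≤ M'.card + S.card := by
  induction S using Finset.strongInduction with
  | _ S ih =>
    intro T hT
    rcases S.eq_empty_or_nonempty with rfl | ⟨e, he⟩
    · refine ⟨∅, Finset.Subset.refl _, ?_, ?_⟩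
      · intro e he; simp at he
      · have hTe : T = ∅ := by
          rw [Finset.eq_empty_iff_forall_notMem]
          intro v hv
          obtain ⟨e, he, _⟩ := hT v hv
          simp at he
        simp [hTe]
    · obtain ⟨a, b, rfl⟩ : ∃ a b, e = s(a, b) := by
        induction e using Sym2.ind with | _ a b => exact ⟨a, b, rfl⟩
      have hS' : S.erase s(a, b) ⊂ S := Finset.erase_ssubset he
      have hcardS : (S.erase s(a, b)).card + 1 = S.card := Finset.card_erase_add_one he
      have hTerase : ∀ (x : V) (T' : Finset V), T'.card ≤ (T'.erase x).card + 1 := by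
        intro x T'
        by_cases hx : x ∈ T'
        · rw [Finset.card_erase_of_mem hx]; omega
        · rw [Finset.erase_eq_of_notMem hx]; omega
      by_cases ha : ∃ e' ∈ S.erase s(a, b), a ∈ e'
      · -- a is covered by another edge: drop b from T
        obtain ⟨M'', hsub, hmatch, hcard⟩ := ih _ hS' (T.erase b) (by
          intro v hv
          have hvb : v ≠ b := Finset.ne_of_mem_erase hv
          obtain ⟨f, hf, hvf⟩ := hT v (Finset.mem_of_mem_erase hv)
          by_cases hfe : f = s(a, b)
          · subst hfe
            rcases Sym2.mem_iff.mp hvf with rfl | rfl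
            · exact ha
            · exact absurd rfl hvb
          · exact ⟨f, Finset.mem_erase.mpr ⟨hfe, hf⟩, hvf⟩)
        refine ⟨M'', hsub.trans (Finset.erase_subset _ _), hmatch, ?_⟩
        have := hTerase b T
        omega
      · by_cases hb : ∃ e' ∈ S.erase s(a, b), b ∈ e'
        · -- b is covered by another edge: drop a from T
          obtain ⟨M'', hsub, hmatch, hcard⟩ := ih _ hS' (T.erase a) (by
            intro v hv
            have hva : v ≠ a := Finset.ne_of_mem_erase hv
            obtain ⟨f, hf, hvf⟩ := hT v (Finset.mem_of_mem_erase hv)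
            by_cases hfe : f = s(a, b)
            · subst hfe
              rcases Sym2.mem_iff.mp hvf with rfl | rfl
              · exact absurd rfl hva
              · exact hb
            · exact ⟨f, Finset.mem_erase.mpr ⟨hfe, hf⟩, hvf⟩)
          refine ⟨M'', hsub.trans (Finset.erase_subset _ _), hmatch, ?_⟩
          have := hTerase a T
          omega
        · -- both a and b are private to e: add e to the matching
          obtain ⟨M'', hsub, hmatch, hcard⟩ := ih _ hS' ((T.erase a).erase b) (by
            intro v hv
            have hvb : v ≠ b := Finset.ne_of_mem_erase hv
            have hva : v ≠ a := Finset.ne_of_mem_erase (Finset.mem_of_mem_erase hv)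
            obtain ⟨f, hf, hvf⟩ := hT v (Finset.mem_of_mem_erase (Finset.mem_of_mem_erase hv))
            by_cases hfe : f = s(a, b)
            · subst hfe
              rcases Sym2.mem_iff.mp hvf with rfl | rfl
              · exact absurd rfl hva
              · exact absurd rfl hvb
            · exact ⟨f, Finset.mem_erase.mpr ⟨hfe, hf⟩, hvf⟩)
          have hem : s(a, b) ∉ M'' := fun h => (Finset.mem_erase.mp (hsub h)).1 rfl
          refine ⟨insert s(a, b) M'', ?_, ?_, ?_⟩
          · exact Finset.insert_subset he (hsub.trans (Finset.erase_subset _ _))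
          · intro e₁ he₁ e₂ he₂ hne v hv
            obtain ⟨hv₁, hv₂⟩ := hv
            rcases Finset.mem_insert.mp he₁ with rfl | h₁
            · rcases Finset.mem_insert.mp he₂ with rfl | h₂
              · exact hne rfl
              · rcases Sym2.mem_iff.mp hv₁ with rfl | rfl
                · exact ha ⟨e₂, hsub h₂, hv₂⟩
                · exact hb ⟨e₂, hsub h₂, hv₂⟩
            · rcases Finset.mem_insert.mp he₂ with rfl | h₂
              · rcases Sym2.mem_iff.mp hv₂ with rfl | rfl
                · exact ha ⟨e₁, hsub h₁, hv₁⟩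
                · exact hb ⟨e₁, hsub h₁, hv₁⟩
              · exact hmatch e₁ h₁ e₂ h₂ hne v ⟨hv₁, hv₂⟩
          · rw [Finset.card_insert_of_notMem hem]
            have h1 := hTerase a T
            have h2 := hTerase b (T.erase a)
            omega

/-- Gallai's theorem: α'(G) + β'(G) = n for graphs without isolated vertices. -/
theorem stmt2 {V : Type*} [Fintype V] [DecidableEq V] (G : SimpleGraph V)
    (hiso : ∀ v : V, ∃ w : V, G.Adj v w)
    (M : Finset (Sym2 V)) (hMsub : ↑M ⊆ G.edgeSet) (hMmatch : IsMatchingSet M)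
    (hMmax : ∀ M' : Finset (Sym2 V), ↑M' ⊆ G.edgeSet → IsMatchingSet M' →
      M'.card ≤ M.card)
    (C : Finset (Sym2 V)) (hC : IsEdgeCoverSet G C)
    (hCmin : ∀ C' : Finset (Sym2 V), IsEdgeCoverSet G C' → C.card ≤ C'.card) :
    M.card + C.card = Fintype.card V := by
  -- Part 2: n ≤ |M| + |C| via a matching inside C
  have part2 : Fintype.card V ≤ M.card + C.card := by
    obtain ⟨M', hsub, hmatch, hcard⟩ :=
      exists_matching_in_cover C Finset.univ (fun v _ => hC.2 v)
    have hM'sub : (↑M' : Set (Sym2 V)) ⊆ G.edgeSet :=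
      Set.Subset.trans (Finset.coe_subset.mpr hsub) hC.1
    have := hMmax M' hM'sub hmatch
    simp only [Finset.card_univ] at hcard
    omega
  -- Part 1: |M| + |C| ≤ n via an edge cover built from M
  have part1 : M.card + C.card ≤ Fintype.card V := by
    classical
    set covered : Finset V := Finset.univ.filter (fun v => ∃ e ∈ M, v ∈ e) with hcov
    -- covered has exactly 2 * M.card vertices
    have hcovcard : covered.card = 2 * M.card := by
      have hbi : covered = M.biUnion (fun e => Finset.univ.filter (· ∈ e)) := by
        ext v; simp [hcov]
      have hdisj : ∀ e ∈ M, ∀ e' ∈ M, e ≠ e' →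
          Disjoint (Finset.univ.filter (· ∈ e)) (Finset.univ.filter (· ∈ e')) := by
        intro e he e' he' hne
        simp only [Finset.disjoint_left, Finset.mem_filter]
        rintro v ⟨-, hv⟩ ⟨-, hv'⟩
        exact hMmatch e he e' he' hne v ⟨hv, hv'⟩
      have htwo : ∀ e ∈ M, (Finset.univ.filter (· ∈ e)).card = 2 := by
        intro e heM
        have hdiag : ¬ e.IsDiag := G.not_isDiag_of_mem_edgeSet (hMsub heM)
        obtain ⟨a, b, rfl⟩ : ∃ a b, e = s(a, b) := by
          induction e using Sym2.ind with | _ a b => exact ⟨a, b, rfl⟩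
        have hab : a ≠ b := by simpa using hdiag
        have : Finset.univ.filter (· ∈ s(a, b)) = {a, b} := by
          ext v; simp [Sym2.mem_iff]
        rw [this, Finset.card_insert_of_notMem (by simpa using hab), Finset.card_singleton]
      rw [hbi, Finset.card_biUnion hdisj, Finset.sum_congr rfl htwo,
        Finset.sum_const, smul_eq_mul, mul_comm]
    -- build an edge cover from M
    have hchoice : ∀ v : V, ∃ e ∈ G.edgeSet, v ∈ e := by
      intro v
      obtain ⟨w, hw⟩ := hiso v
      exact ⟨s(v, w), hw, Sym2.mem_mk_left v w⟩
    choose f hf1 hf2 using hchoice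
    set C' : Finset (Sym2 V) := M ∪ (Finset.univ \ covered).image f with hC'
    have hC'cover : IsEdgeCoverSet G C' := by
      constructor
      · intro e he
        rcases Finset.mem_union.mp he with h | h
        · exact hMsub h
        · obtain ⟨v, -, rfl⟩ := Finset.mem_image.mp h
          exact hf1 v
      · intro v
        by_cases hv : v ∈ covered
        · obtain ⟨e, heM, hve⟩ := (Finset.mem_filter.mp hv).2
          exact ⟨e, Finset.mem_union_left _ heM, hve⟩
        · refine ⟨f v, Finset.mem_union_right _ ?_, hf2 v⟩
          exact Finset.mem_image_of_mem f (Finset.mem_sdiff.mpr ⟨Finset.mem_univ v, hv⟩)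
    have h1 : C.card ≤ C'.card := hCmin C' hC'cover
    have h2 : C'.card ≤ M.card + (Finset.univ \ covered).card :=
      le_trans (Finset.card_union_le _ _) (by
        have := Finset.card_image_le (s := Finset.univ \ covered) (f := f)
        omega)
    have h3 : (Finset.univ \ covered).card = Fintype.card V - covered.card := by
      rw [Finset.card_sdiff_of_subset (Finset.subset_univ _), Finset.card_univ]
    have h4 : covered.card ≤ Fintype.card V := by
      rw [← Finset.card_univ]; exact Finset.card_le_card (Finset.subset_univ _)
    omega
  omega
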